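/- Let (a_n)_{n≥1} satisfy 0 < α ≤ a_n ≤ M, and for each n let f_n : ℝ → ℝ be C¹ and convex with |f_n(t)| ≤ β_n(1+t²) for all t, where (β_n) ∈ s. Define F(x) = (1/2) Σ_{n=1}^∞ a_n x_n² + Σ_{n=1}^∞ f_n(x_n) on s. Then for every x = (x_n) ∈ s and every h = (h_n) ∈ s, the series Σ_{n=1}^∞ (a_n x_n + f_n'(x_n)) h_n converges absolutely, and the directional derivative of F at x in the direction h exists and equals it: lim_{t→0} (F(x + t h) − F(x))/t = Σ_{n=1}^∞ (a_n x_n + f_n'(x_n)) h_n. -/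

import Mathlib

open Filter Topology

/-- The space `s` of rapidly decreasing sequences (indexed so that `x n` represents the
`(n+1)`-st term of the paper's sequence `(x_n)_{n ≥ 1}`). -/
def InS (x : ℕ → ℝ) : Prop :=
  ∀ k : ℕ, ∃ C : ℝ, ∀ n : ℕ, |x n| * ((n : ℝ) + 1) ^ k ≤ C

/-- The `𝓕ₛ`-functional `F(x) = (1/2) Σ a_n x_n² + Σ f_n(x_n)`. -/
noncomputable def Ffun (a : ℕ → ℝ) (f : ℕ → ℝ → ℝ) (x : ℕ → ℝ) : ℝ :=
  (1 / 2) * ∑' n : ℕ, a n * x n ^ 2 + ∑' n : ℕ, f n (x n)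

/-- for every `x, h ∈ s`, the series `Σ (a_n x_n + f_n'(x_n)) h_n` converges
absolutely, and the directional derivative of `F` at `x` in direction `h` exists and equals
it: `lim_{t → 0} (F(x + t h) - F(x)) / t = Σ (a_n x_n + f_n'(x_n)) h_n`. -/
lemma InS.bounded {x : ℕ → ℝ} (hx : InS x) : ∃ B : ℝ, 0 ≤ B ∧ ∀ n, |x n| ≤ B := by
  obtain ⟨C, hC⟩ := hx 0
  exact ⟨C, le_trans (abs_nonneg _) (by simpa using hC 0), fun n => by simpa using hC n⟩

lemma InS.summable_abs {x : ℕ → ℝ} (hx : InS x) : Summable fun n => |x n| := by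
  obtain ⟨C, hC⟩ := hx 2
  have hs : Summable fun n : ℕ => C * (1 / ((n : ℝ) + 1) ^ 2) := by
    have := (summable_nat_add_iff 1).mpr <| Real.summable_one_div_nat_pow.mpr one_lt_two
    exact (this.congr (by intro n; push_cast; ring_nf)).mul_left C
  refine Summable.of_nonneg_of_le (fun n => abs_nonneg _) (fun n => ?_) hs
  have hp : (0:ℝ) < ((n : ℝ) + 1) ^ 2 := by positivity
  rw [mul_one_div, le_div_iff₀ hp]
  exact hC n

lemma InS.add_smul {x h : ℕ → ℝ} (hx : InS x) (hh : InS h) (t : ℝ) :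
    InS (fun n => x n + t * h n) := by
  intro k
  obtain ⟨Cx, hCx⟩ := hx k
  obtain ⟨Ch, hCh⟩ := hh k
  refine ⟨Cx + |t| * Ch, fun n => ?_⟩
  have h1 : |x n + t * h n| ≤ |x n| + |t| * |h n| := by
    calc |x n + t * h n| ≤ |x n| + |t * h n| := abs_add_le _ _
    _ = |x n| + |t| * |h n| := by rw [abs_mul]
  have hp : (0:ℝ) ≤ ((n : ℝ) + 1) ^ k := by positivity
  calc |x n + t * h n| * ((n : ℝ) + 1) ^ k
      ≤ (|x n| + |t| * |h n|) * ((n : ℝ) + 1) ^ k := by gcongr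
    _ = |x n| * ((n : ℝ) + 1) ^ k + |t| * (|h n| * ((n : ℝ) + 1) ^ k) := by ring
    _ ≤ Cx + |t| * Ch :=
        add_le_add (hCx n) (mul_le_mul_of_nonneg_left (hCh n) (abs_nonneg t))

/-- derivative bound for a convex function with quadratic growth -/
lemma deriv_bound_of_convex {f : ℝ → ℝ} {β : ℝ} (hf : ContDiff ℝ 1 f)
    (hc : ConvexOn ℝ Set.univ f) (hg : ∀ t, |f t| ≤ β * (1 + t ^ 2)) (t : ℝ) :
    |deriv f t| ≤ 4 * β * (1 + t ^ 2) := by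
  have hβ0 : 0 ≤ β := le_trans (abs_nonneg _) (by simpa using hg 0)
  have hd : ∀ u : ℝ, DifferentiableAt ℝ f u := fun u =>
    (hf.differentiable one_ne_zero).differentiableAt
  have h1 : deriv f t ≤ f (t + 1) - f t := by
    have := hc.deriv_le_slope (Set.mem_univ t) (Set.mem_univ (t + 1))
      (by linarith) (hd t)
    rwa [slope_def_field, add_sub_cancel_left, div_one] at this
  have h2 : f t - f (t - 1) ≤ deriv f t := by
    have := hc.slope_le_deriv (Set.mem_univ (t - 1)) (Set.mem_univ t)
      (by linarith) (hd t)
    rwa [slope_def_field, sub_sub_cancel, div_one] at this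
  have g1 := abs_le.mp (hg (t + 1))
  have g2 := abs_le.mp (hg t)
  have g3 := abs_le.mp (hg (t - 1))
  rw [abs_le]
  constructor <;> nlinarith [sq_nonneg t, sq_nonneg (t+1), sq_nonneg (t-1)]

theorem stmt_4 (a β : ℕ → ℝ) (α M : ℝ) (f : ℕ → ℝ → ℝ)
    (hα : 0 < α) (ha : ∀ n, α ≤ a n ∧ a n ≤ M)
    (hC1 : ∀ n, ContDiff ℝ 1 (f n)) (hconv : ∀ n, ConvexOn ℝ Set.univ (f n))
    (hgrowth : ∀ n t, |f n t| ≤ β n * (1 + t ^ 2)) (hβ : InS β) :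
    ∀ x h : ℕ → ℝ, InS x → InS h →
      Summable (fun n => |(a n * x n + deriv (f n) (x n)) * h n|) ∧
      Tendsto (fun t : ℝ => (Ffun a f (fun n => x n + t * h n) - Ffun a f x) / t)
        (𝓝[≠] (0 : ℝ)) (𝓝 (∑' n : ℕ, (a n * x n + deriv (f n) (x n)) * h n)) := by
  intro x h hx hh
  obtain ⟨Bx, hBx0, hBx⟩ := hx.bounded
  obtain ⟨Bh, hBh0, hBh⟩ := hh.bounded
  have hβ0 : ∀ n, 0 ≤ β n := fun n => le_trans (abs_nonneg _) (by simpa using hgrowth n 0)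
  have hβsum : Summable β := hβ.summable_abs.congr fun n => abs_of_nonneg (hβ0 n)
  have hhsum := hh.summable_abs
  have hM : ∀ n, |a n| ≤ M := fun n =>
    abs_le.mpr ⟨by linarith [(ha n).1, (ha n).2], (ha n).2⟩
  have hdiff : ∀ n u, DifferentiableAt ℝ (f n) u := fun n u =>
    ((hC1 n).differentiable one_ne_zero).differentiableAt
  have hder : ∀ n u, |deriv (f n) u| ≤ 4 * β n * (1 + u ^ 2) := fun n u =>
    deriv_bound_of_convex (hC1 n) (hconv n) (hgrowth n) u
  set L : ℕ → ℝ := fun n => (a n * x n + deriv (f n) (x n)) * h n with hL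
  have part1 : Summable fun n => |L n| := by
    have hs : Summable fun n => M * Bx * |h n| + 4 * (1 + Bx ^ 2) * Bh * β n :=
      (hhsum.mul_left _).add (hβsum.mul_left _)
    refine Summable.of_nonneg_of_le (fun n => abs_nonneg _) (fun n => ?_) hs
    have h1 : |a n * x n| ≤ M * Bx := by
      rw [abs_mul]
      exact mul_le_mul (hM n) (hBx n) (abs_nonneg _) (le_trans (abs_nonneg _) (hM n))
    have h2 : |deriv (f n) (x n)| ≤ 4 * β n * (1 + Bx ^ 2) := by
      have h3 := hder n (x n)
      have hx2 : (x n) ^ 2 ≤ Bx ^ 2 := by nlinarith [hBx n, abs_nonneg (x n), sq_abs (x n)]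
      nlinarith [hβ0 n]
    calc |L n| = |a n * x n + deriv (f n) (x n)| * |h n| := abs_mul _ _
      _ ≤ (M * Bx + 4 * β n * (1 + Bx ^ 2)) * |h n| :=
          mul_le_mul_of_nonneg_right (le_trans (abs_add_le _ _) (add_le_add h1 h2)) (abs_nonneg _)
      _ = M * Bx * |h n| + 4 * β n * (1 + Bx ^ 2) * |h n| := by ring
      _ ≤ M * Bx * |h n| + 4 * (1 + Bx ^ 2) * Bh * β n := by
          have hpos : 0 ≤ β n * (1 + Bx ^ 2) * (Bh - |h n|) :=
            mul_nonneg (mul_nonneg (hβ0 n) (by positivity)) (sub_nonneg.mpr (hBh n))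
          nlinarith [hpos]
  refine ⟨part1, ?_⟩
  have key : ∀ z : ℕ → ℝ, InS z →
      Summable (fun n => a n * z n ^ 2) ∧ Summable (fun n => f n (z n)) := by
    intro z hz
    obtain ⟨Bz, hBz0, hBz⟩ := hz.bounded
    have hz2 : ∀ n, (z n) ^ 2 ≤ Bz ^ 2 := fun n => by
      nlinarith [hBz n, abs_nonneg (z n), sq_abs (z n)]
    constructor
    · refine Summable.of_norm_bounded (hz.summable_abs.mul_left (M * Bz)) (fun n => ?_)
      have he : |a n * z n ^ 2| = |a n| * |z n| ^ 2 := by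
        rw [abs_mul, abs_pow]
      have hM0 : (0 : ℝ) ≤ M := le_trans (abs_nonneg _) (hM n)
      rw [Real.norm_eq_abs, he]
      calc |a n| * |z n| ^ 2 ≤ M * |z n| ^ 2 :=
            mul_le_mul_of_nonneg_right (hM n) (by positivity)
        _ ≤ M * (Bz * |z n|) := by
            refine mul_le_mul_of_nonneg_left ?_ hM0
            nlinarith [hBz n, abs_nonneg (z n)]
        _ = M * Bz * |z n| := by ring
    · refine Summable.of_norm_bounded (hβsum.mul_right (1 + Bz ^ 2)) (fun n => ?_)
      rw [Real.norm_eq_abs]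
      exact le_trans (hgrowth n (z n)) (by nlinarith [hβ0 n, hz2 n])
  set q : ℝ → ℕ → ℝ := fun t n =>
    ((1 / 2) * (a n * (x n + t * h n) ^ 2 - a n * x n ^ 2)
      + (f n (x n + t * h n) - f n (x n))) / t with hq
  -- equality of difference quotient with tsum of q
  have heq : ∀ t : ℝ, t ≠ 0 →
      (Ffun a f (fun n => x n + t * h n) - Ffun a f x) / t = ∑' n, q t n := by
    intro t ht
    obtain ⟨s1, s3⟩ := key (fun n => x n + t * h n) (hx.add_smul hh t)
    obtain ⟨s2, s4⟩ := key x hx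
    have e1 : ∑' n, ((1 / 2) * (a n * (x n + t * h n) ^ 2 - a n * x n ^ 2)
        + (f n (x n + t * h n) - f n (x n)))
        = (1 / 2) * ((∑' n, a n * (x n + t * h n) ^ 2) - ∑' n, a n * x n ^ 2)
          + ((∑' n, f n (x n + t * h n)) - ∑' n, f n (x n)) := by
      rw [Summable.tsum_add ((s1.sub s2).mul_left _) (s3.sub s4), tsum_mul_left,
        Summable.tsum_sub s1 s2, Summable.tsum_sub s3 s4]
    calc (Ffun a f (fun n => x n + t * h n) - Ffun a f x) / t
        = ((1 / 2) * ((∑' n, a n * (x n + t * h n) ^ 2) - ∑' n, a n * x n ^ 2)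
          + ((∑' n, f n (x n + t * h n)) - ∑' n, f n (x n))) / t := by
          simp only [Ffun]; ring
      _ = (∑' n, ((1 / 2) * (a n * (x n + t * h n) ^ 2 - a n * x n ^ 2)
          + (f n (x n + t * h n) - f n (x n)))) / t := by rw [e1]
      _ = ∑' n, q t n := by rw [← tsum_div_const]
  -- pointwise limits
  have hpt : ∀ n, Tendsto (fun t => q t n) (𝓝[≠] (0 : ℝ)) (𝓝 (L n)) := by
    intro n
    have hg1 : HasDerivAt (fun u : ℝ => x n + u * h n) (h n) 0 := by
      simpa using ((hasDerivAt_id (0 : ℝ)).mul_const (h n)).const_add (x n)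
    have hg2 : HasDerivAt (fun u : ℝ => f n (x n + u * h n)) (deriv (f n) (x n) * h n) 0 := by
      have := ((hdiff n (x n + 0 * h n)).hasDerivAt).comp 0 hg1
      simp only [zero_mul, add_zero] at this
      exact this
    have hg3 : HasDerivAt (fun u : ℝ =>
        (1 / 2) * (a n * (x n + u * h n) ^ 2 - a n * x n ^ 2)
        + (f n (x n + u * h n) - f n (x n))) (L n) 0 := by
      have hp : HasDerivAt (fun u : ℝ => (x n + u * h n) ^ 2)
          ((2 : ℕ) * (x n + 0 * h n) ^ (2 - 1) * h n) 0 := hg1.pow 2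
      have hcomb := (((hp.const_mul (a n)).sub_const (a n * x n ^ 2)).const_mul
        ((1 : ℝ) / 2)).add (hg2.sub_const (f n (x n)))
      refine hcomb.congr_deriv ?_
      simp only [hL]
      push_cast
      ring
    have hslope := hasDerivAt_iff_tendsto_slope.mp hg3
    refine hslope.congr fun t => ?_
    rw [slope_def_field, hq]
    simp only [sub_zero, zero_mul, add_zero, sub_self, mul_zero, zero_add]
  set K : ℝ := 4 * (1 + (Bx + Bh) ^ 2) with hK
  set bound : ℕ → ℝ := fun n => M * (|x n| * |h n| + |h n| ^ 2 / 2) + K * β n with hbound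
  have hbsum : Summable bound := by
    have s1 : Summable fun n => |x n| * |h n| :=
      Summable.of_nonneg_of_le (fun n => by positivity)
        (fun n => mul_le_mul_of_nonneg_right (hBx n) (abs_nonneg _)) (hhsum.mul_left Bx)
    have s2 : Summable fun n => |h n| ^ 2 / 2 := by
      refine Summable.div_const ?_ 2
      refine Summable.of_nonneg_of_le (fun n => by positivity) (fun n => ?_) (hhsum.mul_left Bh)
      calc |h n| ^ 2 = |h n| * |h n| := sq |h n| ▸ by ring
        _ ≤ Bh * |h n| := mul_le_mul_of_nonneg_right (hBh n) (abs_nonneg _)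
    exact ((s1.add s2).mul_left M).add (hβsum.mul_left K)
  have hbd : ∀ᶠ t in 𝓝[≠] (0 : ℝ), ∀ n, ‖q t n‖ ≤ bound n := by
    have h1 : ∀ᶠ t in 𝓝[≠] (0 : ℝ), |t| ≤ 1 := by
      refine eventually_nhdsWithin_of_eventually_nhds ?_
      filter_upwards [Metric.closedBall_mem_nhds (0 : ℝ) one_pos] with t ht
      simpa [Real.dist_eq] using ht
    have h2 : ∀ᶠ t in 𝓝[≠] (0 : ℝ), t ≠ 0 := by
      filter_upwards [eventually_mem_nhdsWithin] with t ht
      simpa using ht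
    filter_upwards [h1, h2] with t ht1 ht2 n
    have hqsplit : q t n = a n * (x n * h n + t * h n ^ 2 / 2)
        + (f n (x n + t * h n) - f n (x n)) / t := by
      rw [hq]; field_simp; ring
    rw [Real.norm_eq_abs, hqsplit, hbound]
    have hA : |a n * (x n * h n + t * h n ^ 2 / 2)| ≤ M * (|x n| * |h n| + |h n| ^ 2 / 2) := by
      rw [abs_mul]
      have hinner : |x n * h n + t * h n ^ 2 / 2| ≤ |x n| * |h n| + |h n| ^ 2 / 2 := by
        calc |x n * h n + t * h n ^ 2 / 2| ≤ |x n * h n| + |t * h n ^ 2 / 2| := abs_add_le _ _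
          _ ≤ |x n| * |h n| + |h n| ^ 2 / 2 := by
              have e1 : |x n * h n| = |x n| * |h n| := abs_mul _ _
              have e2 : |t * h n ^ 2 / 2| = |t| * |h n| ^ 2 / 2 := by
                rw [abs_div, abs_mul, abs_pow]
                norm_num
              rw [e1, e2]
              nlinarith [abs_nonneg t, sq_nonneg |h n|]
      exact mul_le_mul (hM n) hinner (abs_nonneg _) (le_trans (abs_nonneg _) (hM n))
    have hB : |(f n (x n + t * h n) - f n (x n)) / t| ≤ K * β n := by
      set g : ℝ → ℝ := fun u => f n (x n + u * h n) with hgdef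
      have hgc : ConvexOn ℝ Set.univ g := by
        refine ⟨convex_univ, fun u _ v _ p r hp hr hpr => ?_⟩
        have hrw : x n + (p * u + r * v) * h n
            = p * (x n + u * h n) + r * (x n + v * h n) := by linear_combination (-(x n)) * hpr
        have := (hconv n).2 (Set.mem_univ (x n + u * h n)) (Set.mem_univ (x n + v * h n)) hp hr hpr
        simpa [hgdef, smul_eq_mul, hrw] using this
      have hmono := hgc.slope_mono (Set.mem_univ (0 : ℝ))
      have ht' : t ∈ Set.univ \ {(0 : ℝ)} := ⟨trivial, ht2⟩
      have h1' : (1 : ℝ) ∈ Set.univ \ {(0 : ℝ)} := ⟨trivial, one_ne_zero⟩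
      have hm1 : (-1 : ℝ) ∈ Set.univ \ {(0 : ℝ)} := ⟨trivial, by norm_num⟩
      have hub : slope g 0 t ≤ slope g 0 1 := hmono ht' h1' (le_trans (le_abs_self t) ht1)
      have hlb : slope g 0 (-1) ≤ slope g 0 t := hmono hm1 ht' (by have := neg_abs_le t; linarith)
      have e1 : slope g 0 1 = g 1 - g 0 := by rw [slope_def_field]; simp
      have e2 : slope g 0 (-1) = g 0 - g (-1) := by
        rw [slope_def_field, show (-1 : ℝ) - 0 = -1 by norm_num, div_neg, div_one]; ring
      have hq' : (f n (x n + t * h n) - f n (x n)) / t = slope g 0 t := by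
        rw [slope_def_field, sub_zero]; simp [hgdef]
      rw [hq']
      obtain ⟨hx1, hx2⟩ := abs_le.mp (hBx n)
      obtain ⟨hh1, hh2⟩ := abs_le.mp (hBh n)
      set P : ℝ := 1 + (Bx + Bh) ^ 2 with hP
      have hKP : K = 4 * P := by rw [hK, hP]
      have gb : ∀ u : ℝ, |u| ≤ 1 → |g u| ≤ β n * P := by
        intro u hu
        have habs : |x n + u * h n| ≤ Bx + Bh := by
          calc |x n + u * h n| ≤ |x n| + |u| * |h n| := by
                rw [← abs_mul]; exact abs_add_le _ _
            _ ≤ Bx + Bh := by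
                refine add_le_add (hBx n) ?_
                calc |u| * |h n| ≤ 1 * Bh :=
                      mul_le_mul hu (hBh n) (abs_nonneg _) zero_le_one
                  _ = Bh := one_mul _
        have hsq : (x n + u * h n) ^ 2 ≤ (Bx + Bh) ^ 2 := by
          obtain ⟨ha1, ha2⟩ := abs_le.mp habs
          exact sq_le_sq' ha1 ha2
        refine le_trans (hgrowth n (x n + u * h n)) ?_
        rw [hP]
        exact mul_le_mul_of_nonneg_left (by linarith) (hβ0 n)
      have b1 : |g 1| ≤ β n * P := gb 1 (by norm_num)
      have b0 : |g 0| ≤ β n * P := gb 0 (by norm_num)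
      have bm : |g (-1)| ≤ β n * P := gb (-1) (by norm_num)
      obtain ⟨b1a, b1b⟩ := abs_le.mp b1
      obtain ⟨b0a, b0b⟩ := abs_le.mp b0
      obtain ⟨bma, bmb⟩ := abs_le.mp bm
      have hβP : 0 ≤ β n * P := mul_nonneg (hβ0 n) (by rw [hP]; positivity)
      rw [abs_le, hKP]
      rw [e2] at hlb
      rw [e1] at hub
      constructor
      · linarith
      · linarith
    calc |a n * (x n * h n + t * h n ^ 2 / 2) + (f n (x n + t * h n) - f n (x n)) / t|
        ≤ |a n * (x n * h n + t * h n ^ 2 / 2)| + |(f n (x n + t * h n) - f n (x n)) / t| :=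
          abs_add_le _ _
      _ ≤ M * (|x n| * |h n| + |h n| ^ 2 / 2) + K * β n := add_le_add hA hB
  have hmain := tendsto_tsum_of_dominated_convergence hbsum hpt hbd
  refine Tendsto.congr' ?_ hmain
  filter_upwards [eventually_mem_nhdsWithin] with t ht
  exact (heq t (by simpa using ht)).symm
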